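/- For positive semidefinite matrices B and C of the same size and a real number q ≥ 1, tr((B + C)^q) ≥ tr(B^q) + tr(C^q). -/

import Mathlib

open Matrix MeasureTheory Set

namespace McCarthyAux

variable {n : ℕ}

/-- Apply a real function to a Hermitian matrix via its spectral decomposition. -/
noncomputable def matFun {A : Matrix (Fin n) (Fin n) ℝ} (hA : A.IsHermitian) (f : ℝ → ℝ) :
    Matrix (Fin n) (Fin n) ℝ :=
  (hA.eigenvectorUnitary : Matrix (Fin n) (Fin n) ℝ) * Matrix.diagonal (f ∘ hA.eigenvalues) *
    (star hA.eigenvectorUnitary : Matrix (Fin n) (Fin n) ℝ)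

variable {A : Matrix (Fin n) (Fin n) ℝ} (hA : A.IsHermitian)

lemma matFun_mul (f g : ℝ → ℝ) :
    matFun hA f * matFun hA g = matFun hA (fun x => f x * g x) := by
  unfold matFun
  have h1 : (star hA.eigenvectorUnitary : Matrix (Fin n) (Fin n) ℝ) *
      (hA.eigenvectorUnitary : Matrix (Fin n) (Fin n) ℝ) = 1 := by
    exact Unitary.coe_star_mul_self hA.eigenvectorUnitary
  calc (hA.eigenvectorUnitary : Matrix (Fin n) (Fin n) ℝ) * Matrix.diagonal (f ∘ hA.eigenvalues) *
        (star hA.eigenvectorUnitary : Matrix (Fin n) (Fin n) ℝ) *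
        ((hA.eigenvectorUnitary : Matrix (Fin n) (Fin n) ℝ) * Matrix.diagonal (g ∘ hA.eigenvalues) *
        (star hA.eigenvectorUnitary : Matrix (Fin n) (Fin n) ℝ))
      = (hA.eigenvectorUnitary : Matrix (Fin n) (Fin n) ℝ) * (Matrix.diagonal (f ∘ hA.eigenvalues) *
        Matrix.diagonal (g ∘ hA.eigenvalues)) *
        (star hA.eigenvectorUnitary : Matrix (Fin n) (Fin n) ℝ) := by
        rw [show ∀ (u d1 su d2 : Matrix (Fin n) (Fin n) ℝ), u * d1 * su * (u * d2 * su) = u * (d1 * ((su * u) * d2)) * su from fun _ _ _ _ => by noncomm_ring, h1, one_mul, Matrix.mul_assoc]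
    _ = _ := by rw [Matrix.diagonal_mul_diagonal]; rfl

lemma matFun_id : matFun hA id = A := by
  have := hA.spectral_theorem
  rw [RCLike.ofReal_real_eq_id] at this
  simpa [matFun] using this.symm

lemma matFun_one : matFun hA (fun _ => 1) = 1 := by
  unfold matFun
  rw [show ((fun _ => 1) ∘ hA.eigenvalues) = fun _ => (1:ℝ) from rfl, Matrix.diagonal_one, mul_one]
  exact Unitary.coe_mul_star_self hA.eigenvectorUnitary

lemma matFun_add (f g : ℝ → ℝ) :
    matFun hA (fun x => f x + g x) = matFun hA f + matFun hA g := by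
  unfold matFun
  have : Matrix.diagonal ((fun x => f x + g x) ∘ hA.eigenvalues)
      = Matrix.diagonal (f ∘ hA.eigenvalues) + Matrix.diagonal (g ∘ hA.eigenvalues) := by
    exact (Matrix.diagonal_add _ _).symm
  rw [this, Matrix.mul_add, Matrix.add_mul]

lemma matFun_congr {f g : ℝ → ℝ} (h : ∀ i, f (hA.eigenvalues i) = g (hA.eigenvalues i)) :
    matFun hA f = matFun hA g := by
  unfold matFun
  congr 2
  exact congrArg _ (funext h)

lemma matFun_isHermitian (f : ℝ → ℝ) : (matFun hA f).IsHermitian := by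
  unfold matFun
  have : (Matrix.diagonal (f ∘ hA.eigenvalues)).IsHermitian := by
    rw [Matrix.IsHermitian, Matrix.diagonal_conjTranspose]
    congr
  rw [Matrix.star_eq_conjTranspose]
  exact Matrix.isHermitian_mul_mul_conjTranspose _ this

lemma matFun_posSemidef {f : ℝ → ℝ} (h : ∀ i, 0 ≤ f (hA.eigenvalues i)) :
    (matFun hA f).PosSemidef := by
  unfold matFun
  rw [Matrix.star_eq_conjTranspose]
  exact (Matrix.posSemidef_diagonal_iff.mpr (fun i => h i)).mul_mul_conjTranspose_same _

lemma trace_matFun (f : ℝ → ℝ) :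
    (matFun hA f).trace = ∑ i, f (hA.eigenvalues i) := by
  unfold matFun
  rw [Matrix.trace_mul_cycle,
    Unitary.coe_star_mul_self hA.eigenvectorUnitary, one_mul, Matrix.trace_diagonal]
  rfl

lemma sum_eigenvalues_eq_trace : ∑ i, hA.eigenvalues i = A.trace := by
  have := trace_matFun hA id
  rw [matFun_id] at this
  simpa using this.symm


lemma matFun_const (c : ℝ) : matFun hA (fun _ => c) = c • 1 := by
  unfold matFun
  rw [show ((fun _ => c) ∘ hA.eigenvalues) = fun _ => c from rfl, ← Matrix.smul_one_eq_diagonal,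
    Matrix.mul_smul, mul_one, Matrix.smul_mul,
    (Matrix.mem_unitaryGroup_iff).mp hA.eigenvectorUnitary.2]

lemma matFun_affine (l : ℝ) :
    matFun hA (fun x => x + l) = A + l • 1 := by
  have h := matFun_add hA id (fun _ => l)
  rw [matFun_id, matFun_const] at h
  exact h

lemma smul_one_posSemidef {l : ℝ} (hl : 0 ≤ l) :
    (l • (1 : Matrix (Fin n) (Fin n) ℝ)).PosSemidef := by
  rw [Matrix.smul_one_eq_diagonal]
  exact Matrix.PosSemidef.diagonal (fun i => hl)

lemma resolvent_mul (hA' : A.PosSemidef) {l : ℝ} (hl : 0 < l) :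
    (A + l • 1) * matFun hA'.1 (fun x => (x + l)⁻¹) = 1 := by
  rw [← matFun_affine hA'.1, matFun_mul, ← matFun_one hA'.1]
  refine matFun_congr hA'.1 (fun i => ?_)
  have h0 : 0 < hA'.1.eigenvalues i + l := by
    have := hA'.eigenvalues_nonneg i
    linarith
  field_simp

lemma diag_entry_nonneg {M : Matrix (Fin n) (Fin n) ℝ} (hM : M.PosSemidef) (i : Fin n) :
    0 ≤ M i i := by
  have := hM.dotProduct_mulVec_nonneg (Pi.single i 1)
  simpa using this

lemma trace_psd_nonneg {M : Matrix (Fin n) (Fin n) ℝ} (hM : M.PosSemidef) : 0 ≤ M.trace := by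
  rw [Matrix.trace]
  exact Finset.sum_nonneg (fun i _ => diag_entry_nonneg hM i)

lemma trace_mul_psd_nonneg {M N : Matrix (Fin n) (Fin n) ℝ} (hM : M.PosSemidef)
    (hN : N.PosSemidef) : 0 ≤ (M * N).trace := by
  open scoped MatrixOrder in obtain ⟨S, rfl⟩ := CStarAlgebra.nonneg_iff_eq_star_mul_self.mp hM.nonneg
  rw [Matrix.mul_assoc, Matrix.trace_mul_comm]
  exact trace_psd_nonneg (hN.mul_mul_conjTranspose_same S)

lemma transpose_eq_self_of_herm {M : Matrix (Fin n) (Fin n) ℝ} (hM : M.IsHermitian) :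
    Mᵀ = M := by
  have := hM.eq
  rwa [Matrix.conjTranspose_eq_transpose_of_trivial] at this

lemma resolvent_antitone {A B : Matrix (Fin n) (Fin n) ℝ} (hA : A.PosSemidef)
    (hB : B.PosSemidef) (hAB : (A - B).PosSemidef) {l : ℝ} (hl : 0 < l) :
    (matFun hB.1 (fun x => (x + l)⁻¹) - matFun hA.1 (fun x => (x + l)⁻¹)).PosSemidef := by
  set PA := matFun hA.1 (fun x => (x + l)⁻¹) with hPA
  set PB := matFun hB.1 (fun x => (x + l)⁻¹) with hPB
  refine .of_dotProduct_mulVec_nonneg ((matFun_isHermitian hB.1 _).sub (matFun_isHermitian hA.1 _)) (fun x => ?_)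
  set u := PA *ᵥ x with hu
  set v := PB *ᵥ x with hv
  set M := B + l • 1 with hM
  set Cm := A - B with hCm
  have hMsym : Mᵀ = M := by
    refine transpose_eq_self_of_herm (hB.1.add ?_)
    rw [Matrix.smul_one_eq_diagonal]
    exact Matrix.isHermitian_diagonal _
  have hNu : (A + l • 1) *ᵥ u = x := by
    rw [hu, Matrix.mulVec_mulVec, resolvent_mul hA hl, Matrix.one_mulVec]
  have hMv : M *ᵥ v = x := by
    rw [hv, hM, Matrix.mulVec_mulVec, resolvent_mul hB hl, Matrix.one_mulVec]
  have hMu : M *ᵥ u = x - Cm *ᵥ u := by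
    have : M = (A + l • 1) - Cm := by rw [hM, hCm]; abel
    rw [this, Matrix.sub_mulVec, hNu]
  have hMpsd : M.PosSemidef := hB.add (smul_one_posSemidef hl.le)
  have hE : 0 ≤ (u - v) ⬝ᵥ (M *ᵥ (u - v)) := by
    have := hMpsd.dotProduct_mulVec_nonneg (u - v)
    simpa using this
  have hCu : 0 ≤ u ⬝ᵥ (Cm *ᵥ u) := by
    have := hAB.dotProduct_mulVec_nonneg u
    simpa using this
  have h4 : v ⬝ᵥ (M *ᵥ u) = x ⬝ᵥ u := by
    rw [Matrix.dotProduct_mulVec, ← Matrix.mulVec_transpose, hMsym, hMv]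
  have h1 : u ⬝ᵥ (M *ᵥ v) = u ⬝ᵥ x := by rw [hMv]
  have h2 : v ⬝ᵥ (M *ᵥ v) = v ⬝ᵥ x := by rw [hMv]
  have h3 : u ⬝ᵥ (M *ᵥ u) = u ⬝ᵥ x - u ⬝ᵥ (Cm *ᵥ u) := by
    rw [hMu, dotProduct_sub]
  have hexp : (u - v) ⬝ᵥ (M *ᵥ (u - v))
      = u ⬝ᵥ (M *ᵥ u) - u ⬝ᵥ (M *ᵥ v) - v ⬝ᵥ (M *ᵥ u) + v ⬝ᵥ (M *ᵥ v) := by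
    rw [Matrix.mulVec_sub, sub_dotProduct, dotProduct_sub, dotProduct_sub]
    ring
  have hux : u ⬝ᵥ x = x ⬝ᵥ u := dotProduct_comm _ _
  have hvx : v ⬝ᵥ x = x ⬝ᵥ v := dotProduct_comm _ _
  have htarget : star x ⬝ᵥ ((PB - PA) *ᵥ x) = x ⬝ᵥ v - x ⬝ᵥ u := by
    rw [Matrix.sub_mulVec, dotProduct_sub, ← hu, ← hv, star_trivial]
  rw [htarget]
  rw [hexp, h1, h2, h3, h4] at hE
  linarith


lemma sum_resolvent_le {B C : Matrix (Fin n) (Fin n) ℝ} (hB : B.PosSemidef) (hC : C.PosSemidef)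
    {l : ℝ} (hl : 0 < l) :
    ∑ i, ((hB.add hC).1.eigenvalues i * ((hB.add hC).1.eigenvalues i + l)⁻¹)
      ≤ ∑ i, (hB.1.eigenvalues i * (hB.1.eigenvalues i + l)⁻¹)
        + ∑ i, (hC.1.eigenvalues i * (hC.1.eigenvalues i + l)⁻¹) := by
  have key : ∀ (M : Matrix (Fin n) (Fin n) ℝ) (hM : M.PosSemidef),
      (M * matFun hM.1 (fun x => (x + l)⁻¹)).trace
        = ∑ i, (hM.1.eigenvalues i * (hM.1.eigenvalues i + l)⁻¹) := by
    intro M hM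
    calc (M * matFun hM.1 (fun x => (x + l)⁻¹)).trace
        = (matFun hM.1 id * matFun hM.1 (fun x => (x + l)⁻¹)).trace := by rw [matFun_id]
      _ = (matFun hM.1 (fun x => id x * (x + l)⁻¹)).trace := by rw [matFun_mul]
      _ = _ := by rw [trace_matFun]; simp only [id]
  have hA := hB.add hC
  set PA := matFun hA.1 (fun x => (x + l)⁻¹) with hPAdef
  have split : ((B + C) * PA).trace = (B * PA).trace + (C * PA).trace := by
    rw [Matrix.add_mul, Matrix.trace_add]
  have hABb : ((B + C) - B).PosSemidef := by
    have : B + C - B = C := by abel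
    rwa [this]
  have hABc : ((B + C) - C).PosSemidef := by
    have : B + C - C = B := by abel
    rwa [this]
  have hBle : (B * PA).trace ≤ (B * matFun hB.1 (fun x => (x + l)⁻¹)).trace := by
    have h := trace_mul_psd_nonneg hB (resolvent_antitone hA hB hABb hl)
    rw [Matrix.mul_sub, Matrix.trace_sub] at h
    linarith
  have hCle : (C * PA).trace ≤ (C * matFun hC.1 (fun x => (x + l)⁻¹)).trace := by
    have h := trace_mul_psd_nonneg hC (resolvent_antitone hA hC hABc hl)
    rw [Matrix.mul_sub, Matrix.trace_sub] at h
    linarith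
  calc ∑ i, ((hB.add hC).1.eigenvalues i * ((hB.add hC).1.eigenvalues i + l)⁻¹)
      = ((B + C) * PA).trace := (key _ hA).symm
    _ = (B * PA).trace + (C * PA).trace := split
    _ ≤ _ := by
        rw [← key B hB, ← key C hC]
        exact add_le_add hBle hCle

/-! ### Integral representation of `x ^ q` for `1 < q < 2` -/

lemma integrableOn_of_bounds {f : ℝ → ℝ}
    (hf : AEStronglyMeasurable f (MeasureTheory.volume.restrict (Ioi (0:ℝ))))
    {c1 c2 e1 e2 : ℝ} (he1 : -1 < e1) (he2 : e2 < -1)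
    (h1 : ∀ l ∈ Ioc (0:ℝ) 1, ‖f l‖ ≤ c1 * l ^ e1)
    (h2 : ∀ l ∈ Ioi (1:ℝ), ‖f l‖ ≤ c2 * l ^ e2) :
    IntegrableOn f (Ioi (0:ℝ)) := by
  have hsplit : Ioi (0:ℝ) = Ioc (0:ℝ) 1 ∪ Ioi 1 := (Ioc_union_Ioi_eq_Ioi zero_le_one).symm
  rw [hsplit]
  apply MeasureTheory.IntegrableOn.union
  · have hbase : IntegrableOn (fun l : ℝ => c1 * l ^ e1) (Ioc (0:ℝ) 1) := by
      have := (intervalIntegral.intervalIntegrable_rpow' (a := 0) (b := 1) he1)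
      rw [intervalIntegrable_iff_integrableOn_Ioc_of_le zero_le_one] at this
      exact this.const_mul c1
    refine Integrable.mono' hbase (hf.mono_set Ioc_subset_Ioi_self) ?_
    exact (MeasureTheory.ae_restrict_iff' measurableSet_Ioc).mpr (Filter.Eventually.of_forall h1)
  · have hbase : IntegrableOn (fun l : ℝ => c2 * l ^ e2) (Ioi (1:ℝ)) :=
      (integrableOn_Ioi_rpow_of_lt he2 one_pos).const_mul c2
    refine Integrable.mono' hbase (hf.mono_set (Ioi_subset_Ioi zero_le_one)) ?_
    exact (MeasureTheory.ae_restrict_iff' measurableSet_Ioi).mpr (Filter.Eventually.of_forall h2)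

/-- The normalisation constant `∫_0^∞ μ^(q-2)/(1+μ) dμ`. -/
noncomputable def Iq (q : ℝ) : ℝ := ∫ μ in Ioi (0:ℝ), μ ^ (q-2) * (1 + μ)⁻¹

lemma kernel0_contOn {q : ℝ} : ContinuousOn (fun μ : ℝ => μ ^ (q-2) * (1 + μ)⁻¹) (Ioi (0:ℝ)) := by
  apply ContinuousOn.mul
  · exact ContinuousOn.rpow_const continuousOn_id (fun x hx => Or.inl (ne_of_gt hx))
  · apply ContinuousOn.inv₀ (by fun_prop)
    intro x hx
    have : (0:ℝ) < x := hx
    positivity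

lemma kernel0_integrableOn {q : ℝ} (hq1 : 1 < q) (hq2 : q < 2) :
    IntegrableOn (fun μ : ℝ => μ ^ (q-2) * (1 + μ)⁻¹) (Ioi (0:ℝ)) := by
  refine integrableOn_of_bounds (kernel0_contOn.aestronglyMeasurable measurableSet_Ioi)
    (c1 := 1) (c2 := 1) (e1 := q - 2) (e2 := q - 3) (by linarith) (by linarith) ?_ ?_
  · intro l hl
    have hl0 : (0:ℝ) < l := hl.1
    have h1 : (1 + l)⁻¹ ≤ 1 := by
      rw [inv_le_one_iff₀]; right; linarith
    have hpos : (0:ℝ) ≤ l ^ (q-2) * (1+l)⁻¹ := by positivity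
    rw [Real.norm_of_nonneg hpos, one_mul]
    calc l ^ (q-2) * (1+l)⁻¹ ≤ l ^ (q-2) * 1 := by
          apply mul_le_mul_of_nonneg_left h1 (by positivity)
      _ = l ^ (q-2) := mul_one _
  · intro l hl
    have hl1 : (1:ℝ) < l := hl
    have hl0 : (0:ℝ) < l := by linarith
    have h1 : (1 + l)⁻¹ ≤ l⁻¹ := by
      apply inv_anti₀ hl0; linarith
    have hpos : (0:ℝ) ≤ l ^ (q-2) * (1+l)⁻¹ := by positivity
    rw [Real.norm_of_nonneg hpos, one_mul]
    calc l ^ (q-2) * (1+l)⁻¹ ≤ l ^ (q-2) * l⁻¹ := by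
          apply mul_le_mul_of_nonneg_left h1 (by positivity)
      _ = l ^ (q-3) := by
          rw [← Real.rpow_neg_one l, ← Real.rpow_add hl0]
          congr 1; ring

lemma Iq_pos {q : ℝ} (hq1 : 1 < q) (hq2 : q < 2) : 0 < Iq q := by
  have hc : (0:ℝ) < 2 ^ (q-2) * 3⁻¹ := by positivity
  have hlow : ∀ μ ∈ Ioc (1:ℝ) 2, 2 ^ (q-2) * 3⁻¹ ≤ μ ^ (q-2) * (1 + μ)⁻¹ := by
    intro μ hμ
    have h1 : (2:ℝ) ^ (q-2) ≤ μ ^ (q-2) :=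
      Real.rpow_le_rpow_of_nonpos (by linarith [hμ.1]) hμ.2 (by linarith)
    have h2 : (3:ℝ)⁻¹ ≤ (1 + μ)⁻¹ := by
      apply inv_anti₀ (by linarith [hμ.1]); linarith [hμ.2]
    exact mul_le_mul h1 h2 (by positivity) (Real.rpow_nonneg (by linarith [hμ.1]) _)
  have hIoc : IntegrableOn (fun μ : ℝ => μ ^ (q-2) * (1 + μ)⁻¹) (Ioc (1:ℝ) 2) :=
    (kernel0_integrableOn hq1 hq2).mono_set (fun x hx => lt_of_lt_of_le one_pos hx.1.le)
  have step1 : 2 ^ (q-2) * 3⁻¹ ≤ ∫ μ in Ioc (1:ℝ) 2, μ ^ (q-2) * (1 + μ)⁻¹ := by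
    have hconst : ∫ (_ : ℝ) in Ioc (1:ℝ) 2, (2:ℝ) ^ (q-2) * 3⁻¹
        = 2 ^ (q-2) * 3⁻¹ := by
      rw [MeasureTheory.setIntegral_const]
      simp [Real.volume_Ioc]
      norm_num
    rw [← hconst]
    exact MeasureTheory.setIntegral_mono_on ((MeasureTheory.integrableOn_const_iff).mpr
      (Or.inr (by rw [Real.volume_Ioc]; exact ENNReal.ofReal_lt_top))) hIoc
      measurableSet_Ioc hlow
  have step2 : (∫ μ in Ioc (1:ℝ) 2, μ ^ (q-2) * (1 + μ)⁻¹) ≤ Iq q := by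
    apply MeasureTheory.setIntegral_mono_set (kernel0_integrableOn hq1 hq2)
    · apply (MeasureTheory.ae_restrict_iff' measurableSet_Ioi).mpr
      apply Filter.Eventually.of_forall
      intro μ hμ
      have : (0:ℝ) < μ := hμ
      positivity
    · apply Filter.Eventually.of_forall
      intro x hx
      exact lt_of_lt_of_le one_pos hx.1.le
  linarith


lemma kernelx_integrableOn {q : ℝ} (hq1 : 1 < q) (hq2 : q < 2) {x : ℝ} (hx : 0 ≤ x) :
    IntegrableOn (fun l : ℝ => l ^ (q-2) * (x^2 * (x + l)⁻¹)) (Ioi (0:ℝ)) := by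
  rcases eq_or_lt_of_le hx with rfl|hx0
  · have : (fun l : ℝ => l ^ (q-2) * ((0:ℝ)^2 * ((0:ℝ) + l)⁻¹)) = fun _ => (0:ℝ) := by
      funext l; simp
    rw [this]
    exact MeasureTheory.integrableOn_zero
  have hcont : ContinuousOn (fun l : ℝ => l ^ (q-2) * (x^2 * (x + l)⁻¹)) (Ioi (0:ℝ)) := by
    apply ContinuousOn.mul
    · exact ContinuousOn.rpow_const continuousOn_id (fun y hy => Or.inl (ne_of_gt hy))
    · apply ContinuousOn.mul continuousOn_const
      apply ContinuousOn.inv₀ (by fun_prop)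
      intro y hy
      have : (0:ℝ) < y := hy
      positivity
  refine integrableOn_of_bounds (hcont.aestronglyMeasurable measurableSet_Ioi)
    (c1 := x) (c2 := x^2) (e1 := q - 2) (e2 := q - 3) (by linarith) (by linarith) ?_ ?_
  · intro l hl
    have hl0 : (0:ℝ) < l := hl.1
    have h1 : (x + l)⁻¹ ≤ x⁻¹ := inv_anti₀ hx0 (by linarith)
    have hpos : (0:ℝ) ≤ l ^ (q-2) * (x^2 * (x + l)⁻¹) := by positivity
    rw [Real.norm_of_nonneg hpos]
    calc l ^ (q-2) * (x^2 * (x+l)⁻¹) ≤ l ^ (q-2) * (x^2 * x⁻¹) := by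
          apply mul_le_mul_of_nonneg_left _ (Real.rpow_nonneg hl0.le _)
          exact mul_le_mul_of_nonneg_left h1 (by positivity)
      _ = x * l ^ (q-2) := by field_simp
  · intro l hl
    have hl1 : (1:ℝ) < l := hl
    have hl0 : (0:ℝ) < l := by linarith
    have h1 : (x + l)⁻¹ ≤ l⁻¹ := inv_anti₀ hl0 (by linarith)
    have hpos : (0:ℝ) ≤ l ^ (q-2) * (x^2 * (x + l)⁻¹) := by positivity
    rw [Real.norm_of_nonneg hpos]
    calc l ^ (q-2) * (x^2 * (x+l)⁻¹) ≤ l ^ (q-2) * (x^2 * l⁻¹) := by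
          apply mul_le_mul_of_nonneg_left _ (Real.rpow_nonneg hl0.le _)
          exact mul_le_mul_of_nonneg_left h1 (by positivity)
      _ = x^2 * (l ^ (q-2) * l⁻¹) := by ring
      _ = x^2 * l ^ (q-3) := by
          rw [← Real.rpow_neg_one l, ← Real.rpow_add hl0]
          congr 2
          ring

lemma kernelx_integral {q : ℝ} (hq1 : 1 < q) (hq2 : q < 2) {x : ℝ} (hx : 0 ≤ x) :
    ∫ l in Ioi (0:ℝ), l ^ (q-2) * (x^2 * (x + l)⁻¹) = Iq q * x ^ q := by
  rcases eq_or_lt_of_le hx with rfl|hx0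
  · rw [Real.zero_rpow (by linarith : q ≠ 0)]
    simp
  · have hsub := MeasureTheory.integral_comp_mul_left_Ioi
      (fun l => l ^ (q-2) * (x^2 * (x + l)⁻¹)) 0 hx0
    rw [mul_zero] at hsub
    have heq : ∀ μ ∈ Ioi (0:ℝ), (x*μ) ^ (q-2) * (x^2 * (x + x*μ)⁻¹)
        = x ^ (q-1) * (μ ^ (q-2) * (1+μ)⁻¹) := by
      intro μ hμ
      have hμ0 : (0:ℝ) < μ := hμ
      rw [Real.mul_rpow hx0.le hμ0.le, show x + x*μ = x*(1+μ) from by ring, mul_inv,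
        show x ^ (q-1) = x ^ (q-2) * x from by
          rw [← Real.rpow_add_one hx0.ne']; congr 1; ring]
      have h1μ : (0:ℝ) < 1 + μ := by linarith
      field_simp
    have h2 : (∫ μ in Ioi (0:ℝ), (x*μ) ^ (q-2) * (x^2 * (x + x*μ)⁻¹))
        = x ^ (q-1) * Iq q := by
      rw [MeasureTheory.setIntegral_congr_fun measurableSet_Ioi heq,
        MeasureTheory.integral_const_mul]
      rfl
    have hxq : x * (x ^ (q-1) * Iq q) = Iq q * x ^ q := by
      rw [← mul_assoc, show x * x ^ (q-1) = x ^ q from by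
        rw [show q = 1 + (q-1) from by ring, Real.rpow_add hx0, Real.rpow_one]; ring_nf]
      ring
    rw [h2] at hsub
    have := congrArg (fun t => x • t) hsub
    simp only [smul_eq_mul] at this
    rw [mul_inv_cancel_left₀ hx0.ne'] at this
    rw [← this]
    exact hxq

lemma branch_mid {B C : Matrix (Fin n) (Fin n) ℝ} (hB : B.PosSemidef) (hC : C.PosSemidef)
    {q : ℝ} (hq1 : 1 < q) (hq2 : q < 2) :
    ∑ i, hB.1.eigenvalues i ^ q + ∑ i, hC.1.eigenvalues i ^ q
      ≤ ∑ i, (hB.add hC).1.eigenvalues i ^ q := by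
  have hIq := Iq_pos hq1 hq2
  set α := (hB.add hC).1.eigenvalues with hα
  set β := hB.1.eigenvalues with hβ
  set γ := hC.1.eigenvalues with hγ
  have hα0 : ∀ i, 0 ≤ α i := (hB.add hC).eigenvalues_nonneg
  have hβ0 : ∀ i, 0 ≤ β i := hB.eigenvalues_nonneg
  have hγ0 : ∀ i, 0 ≤ γ i := hC.eigenvalues_nonneg
  have repr : ∀ (v : Fin n → ℝ), (∀ i, 0 ≤ v i) →
      ∑ i, v i ^ q = (Iq q)⁻¹ * ∫ l in Ioi (0:ℝ), ∑ i, l ^ (q-2) * ((v i)^2 * (v i + l)⁻¹) := by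
    intro v hv
    rw [MeasureTheory.integral_finset_sum _ (fun i _ => kernelx_integrableOn hq1 hq2 (hv i))]
    have : ∀ i : Fin n, (∫ l in Ioi (0:ℝ), l ^ (q-2) * ((v i)^2 * (v i + l)⁻¹))
        = Iq q * v i ^ q := fun i => kernelx_integral hq1 hq2 (hv i)
    simp_rw [this]
    rw [← Finset.mul_sum, ← mul_assoc, inv_mul_cancel₀ hIq.ne', one_mul]
  have hintA : IntegrableOn (fun l : ℝ => ∑ i, l ^ (q-2) * ((α i)^2 * (α i + l)⁻¹)) (Ioi 0) :=
    MeasureTheory.integrable_finset_sum _ (fun i _ => kernelx_integrableOn hq1 hq2 (hα0 i))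
  have hintB : IntegrableOn (fun l : ℝ => ∑ i, l ^ (q-2) * ((β i)^2 * (β i + l)⁻¹)) (Ioi 0) :=
    MeasureTheory.integrable_finset_sum _ (fun i _ => kernelx_integrableOn hq1 hq2 (hβ0 i))
  have hintC : IntegrableOn (fun l : ℝ => ∑ i, l ^ (q-2) * ((γ i)^2 * (γ i + l)⁻¹)) (Ioi 0) :=
    MeasureTheory.integrable_finset_sum _ (fun i _ => kernelx_integrableOn hq1 hq2 (hγ0 i))
  have tracesum : ∑ i, α i = ∑ i, β i + ∑ i, γ i := by
    rw [hα, hβ, hγ, sum_eigenvalues_eq_trace, sum_eigenvalues_eq_trace,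
      sum_eigenvalues_eq_trace, Matrix.trace_add]
  have pointwise : ∀ l ∈ Ioi (0:ℝ),
      (∑ i, l ^ (q-2) * ((β i)^2 * (β i + l)⁻¹)) + (∑ i, l ^ (q-2) * ((γ i)^2 * (γ i + l)⁻¹))
        ≤ ∑ i, l ^ (q-2) * ((α i)^2 * (α i + l)⁻¹) := by
    intro l hl
    have hl0 : (0:ℝ) < l := hl
    have key : ∀ x : ℝ, 0 ≤ x → x^2 * (x + l)⁻¹ = x - l * (x * (x + l)⁻¹) := by
      intro x hx
      have : (0:ℝ) < x + l := by linarith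
      field_simp
      ring
    have hres := sum_resolvent_le hB hC hl0
    rw [← hα, ← hβ, ← hγ] at hres
    have hfact : ∀ (v : Fin n → ℝ), (∀ i, 0 ≤ v i) →
        ∑ i, l ^ (q-2) * ((v i)^2 * (v i + l)⁻¹)
          = l ^ (q-2) * (∑ i, v i - l * ∑ i, v i * (v i + l)⁻¹) := by
      intro v hv
      rw [← Finset.mul_sum]
      congr 1
      rw [Finset.mul_sum, ← Finset.sum_sub_distrib]
      exact Finset.sum_congr rfl fun i _ => by rw [key _ (hv i)]
    rw [hfact α hα0, hfact β hβ0, hfact γ hγ0, ← mul_add]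
    apply mul_le_mul_of_nonneg_left _ (Real.rpow_nonneg hl0.le _)
    rw [tracesum]
    nlinarith [hres, hl0.le]
  rw [repr α hα0, repr β hβ0, repr γ hγ0, ← mul_add]
  apply mul_le_mul_of_nonneg_left _ (by positivity)
  rw [← MeasureTheory.integral_add hintB hintC]
  exact MeasureTheory.setIntegral_mono_on (hintB.add hintC) hintA measurableSet_Ioi pointwise


lemma trace_diagmul (d : Fin n → ℝ) (N : Matrix (Fin n) (Fin n) ℝ) :
    (Matrix.diagonal d * N).trace = ∑ i, d i * N i i := by
  rw [Matrix.trace]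
  refine Finset.sum_congr rfl fun i _ => ?_
  rw [Matrix.diag_apply, Matrix.diagonal_mul]

lemma entry_conj_left (W : Matrix (Fin n) (Fin n) ℝ) (d : Fin n → ℝ) (j : Fin n) :
    (star W * Matrix.diagonal d * W) j j = ∑ i, (W i j * W i j) * d i := by
  rw [Matrix.mul_apply]
  refine Finset.sum_congr rfl fun i _ => ?_
  rw [Matrix.mul_diagonal, Matrix.star_apply, star_trivial]
  ring

lemma entry_conj_right (W : Matrix (Fin n) (Fin n) ℝ) (d : Fin n → ℝ) (i : Fin n) :
    (W * Matrix.diagonal d * star W) i i = ∑ j, (W i j * W i j) * d j := by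
  rw [Matrix.mul_apply]
  refine Finset.sum_congr rfl fun j _ => ?_
  rw [Matrix.mul_diagonal, Matrix.star_apply, star_trivial]
  ring

lemma key_ge2 {A B : Matrix (Fin n) (Fin n) ℝ} (hA : A.PosSemidef) (hB : B.PosSemidef)
    (hAB : (A - B).PosSemidef) {p : ℝ} (hp : 1 ≤ p) :
    ∑ j, hB.1.eigenvalues j ^ (p+1) ≤ (matFun hA.1 (fun x => x ^ p) * B).trace := by
  set α := hA.1.eigenvalues with hαdef
  set β := hB.1.eigenvalues with hβdef
  have hα0 : ∀ i, 0 ≤ α i := hA.eigenvalues_nonneg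
  have hβ0 : ∀ i, 0 ≤ β i := hB.eigenvalues_nonneg
  set U : Matrix (Fin n) (Fin n) ℝ := (hA.1.eigenvectorUnitary : Matrix (Fin n) (Fin n) ℝ)
    with hUdef
  set V : Matrix (Fin n) (Fin n) ℝ := (hB.1.eigenvectorUnitary : Matrix (Fin n) (Fin n) ℝ)
    with hVdef
  set W : Matrix (Fin n) (Fin n) ℝ := star U * V with hWdef
  have hUs : U * star U = 1 := Unitary.coe_mul_star_self hA.1.eigenvectorUnitary
  have hsV : star V * V = 1 := Unitary.coe_star_mul_self hB.1.eigenvectorUnitary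
  have hstarW : star W = star V * U := by rw [hWdef, Matrix.star_mul, star_star]
  have hWW : star W * W = 1 := by
    rw [hstarW, hWdef]
    calc star V * U * (star U * V) = star V * (U * (star U * V)) := by
          simp only [Matrix.mul_assoc]
      _ = star V * ((U * star U) * V) := by simp only [Matrix.mul_assoc]
      _ = 1 := by rw [hUs, Matrix.one_mul, hsV]
  have colsum : ∀ j, ∑ i, W i j * W i j = 1 := by
    intro j
    have h := congrArg (fun M : Matrix (Fin n) (Fin n) ℝ => M j j) hWW
    simp only [Matrix.mul_apply, Matrix.one_apply_eq] at h
    calc ∑ i, W i j * W i j = ∑ i, star W j i * W i j := by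
          refine Finset.sum_congr rfl fun i _ => ?_
          rw [Matrix.star_apply, star_trivial]
      _ = 1 := h
  -- A and B expressed spectrally
  have hAspec : A = U * Matrix.diagonal (id ∘ α) * star U := by
    rw [← matFun_id hA.1]; rfl
  have hBspec : B = V * Matrix.diagonal (id ∘ β) * star V := by
    rw [← matFun_id hB.1]; rfl
  -- the constraint  β j ≤ ∑ i (W i j)^2 α i
  have constraint : ∀ j, β j ≤ ∑ i, (W i j * W i j) * α i := by
    intro j
    have hVAV : star V * A * V = star W * Matrix.diagonal (id ∘ α) * W := by
      rw [hAspec, hstarW, hWdef]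
      simp only [Matrix.mul_assoc]
    have hVBV : star V * B * V = Matrix.diagonal (id ∘ β) := by
      rw [hBspec]
      calc star V * (V * Matrix.diagonal (id ∘ β) * star V) * V
          = (star V * V) * Matrix.diagonal (id ∘ β) * (star V * V) := by
            simp only [Matrix.mul_assoc]
        _ = Matrix.diagonal (id ∘ β) := by rw [hsV, Matrix.one_mul, Matrix.mul_one]
    have hsub : star V * (A - B) * V = star V * A * V - star V * B * V := by
      rw [Matrix.mul_sub, Matrix.sub_mul]
    have hpsd : (star V * (A - B) * V).PosSemidef := by
      rw [Matrix.star_eq_conjTranspose]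
      exact hAB.conjTranspose_mul_mul_same V
    have hdiag := diag_entry_nonneg hpsd j
    rw [hsub] at hdiag
    have e1 : (star V * A * V) j j = ∑ i, (W i j * W i j) * (id ∘ α) i := by
      rw [hVAV, entry_conj_left]
    have e2 : (star V * B * V) j j = β j := by
      rw [hVBV, Matrix.diagonal_apply_eq]; rfl
    have : (star V * A * V) j j - (star V * B * V) j j ≥ 0 := by
      simpa [Matrix.sub_apply] using hdiag
    have e1' : (star V * A * V) j j = ∑ i, (W i j * W i j) * α i := by
      rw [e1]; rfl
    linarith [this, e1'.symm ▸ this]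
  -- trace formula
  have traceform : (matFun hA.1 (fun x => x ^ p) * B).trace
      = ∑ i, α i ^ p * (∑ j, (W i j * W i j) * β j) := by
    have hmf : matFun hA.1 (fun x => x ^ p)
        = U * Matrix.diagonal ((fun x => x ^ p) ∘ α) * star U := rfl
    calc (matFun hA.1 (fun x => x ^ p) * B).trace
        = (U * (Matrix.diagonal ((fun x => x ^ p) ∘ α) * star U *
            (V * Matrix.diagonal (id ∘ β) * star V))).trace := by
          rw [hmf, hBspec]; simp only [Matrix.mul_assoc]
      _ = ((Matrix.diagonal ((fun x => x ^ p) ∘ α) * star U *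
            (V * Matrix.diagonal (id ∘ β) * star V)) * U).trace := Matrix.trace_mul_comm _ _
      _ = (Matrix.diagonal ((fun x => x ^ p) ∘ α) * (W * Matrix.diagonal (id ∘ β) * star W)).trace := by
          rw [hWdef, hstarW]; simp only [Matrix.mul_assoc]
      _ = ∑ i, ((fun x => x ^ p) ∘ α) i * (W * Matrix.diagonal (id ∘ β) * star W) i i :=
          trace_diagmul _ _
      _ = ∑ i, α i ^ p * (∑ j, (W i j * W i j) * β j) := by
          refine Finset.sum_congr rfl fun i _ => ?_
          rw [entry_conj_right]
          rfl
  -- per-index Jensen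
  have perj : ∀ j, β j ^ (p+1) ≤ β j * ∑ i, (W i j * W i j) * α i ^ p := by
    intro j
    rcases eq_or_lt_of_le (hβ0 j) with h|h
    · rw [← h, Real.zero_rpow (by linarith : p + 1 ≠ 0), zero_mul]
    · have jensen := Real.rpow_arith_mean_le_arith_mean_rpow Finset.univ
        (fun i => W i j * W i j) α (fun i _ => mul_self_nonneg _) (colsum j)
        (fun i _ => hα0 i) hp
      have h1 : β j ^ p ≤ ∑ i, (W i j * W i j) * α i ^ p :=
        le_trans (Real.rpow_le_rpow (hβ0 j) (constraint j) (by linarith)) jensen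
      calc β j ^ (p+1) = β j * β j ^ p := by
            rw [Real.rpow_add_one (ne_of_gt h)]; ring
        _ ≤ β j * ∑ i, (W i j * W i j) * α i ^ p :=
            mul_le_mul_of_nonneg_left h1 (hβ0 j)
  calc ∑ j, β j ^ (p+1) ≤ ∑ j, β j * ∑ i, (W i j * W i j) * α i ^ p :=
        Finset.sum_le_sum fun j _ => perj j
    _ = ∑ i, α i ^ p * (∑ j, (W i j * W i j) * β j) := by
        simp_rw [Finset.mul_sum]
        rw [Finset.sum_comm]
        exact Finset.sum_congr rfl fun i _ => Finset.sum_congr rfl fun j _ => by ring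
    _ = (matFun hA.1 (fun x => x ^ p) * B).trace := traceform.symm

lemma branch_ge2 {B C : Matrix (Fin n) (Fin n) ℝ} (hB : B.PosSemidef) (hC : C.PosSemidef)
    {q : ℝ} (hq : 2 ≤ q) :
    ∑ i, hB.1.eigenvalues i ^ q + ∑ i, hC.1.eigenvalues i ^ q
      ≤ ∑ i, (hB.add hC).1.eigenvalues i ^ q := by
  have hA := hB.add hC
  have hp1 : 1 ≤ q - 1 := by linarith
  have hq' : q = (q - 1) + 1 := by ring
  have hABb : (B + C - B).PosSemidef := by
    have : B + C - B = C := by abel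
    rwa [this]
  have hABc : (B + C - C).PosSemidef := by
    have : B + C - C = B := by abel
    rwa [this]
  have e1 := key_ge2 hA hB hABb hp1
  have e2 := key_ge2 hA hC hABc hp1
  have total : (matFun hA.1 (fun x => x ^ (q-1)) * B).trace
      + (matFun hA.1 (fun x => x ^ (q-1)) * C).trace
      = ∑ i, hA.1.eigenvalues i ^ q := by
    rw [← Matrix.trace_add, ← Matrix.mul_add]
    have hstep : matFun hA.1 (fun x => x ^ (q-1)) * (B + C)
        = matFun hA.1 (fun x => x ^ (q-1)) * matFun hA.1 id := by rw [matFun_id]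
    rw [hstep, matFun_mul, trace_matFun]
    refine Finset.sum_congr rfl fun i _ => ?_
    have h0 := hA.eigenvalues_nonneg i
    rcases eq_or_lt_of_le h0 with h|h
    · rw [← h]
      simp only [id]
      rw [Real.zero_rpow (by linarith : q ≠ 0), mul_zero]
    · simp only [id]
      rw [show hA.1.eigenvalues i ^ q = hA.1.eigenvalues i ^ ((q-1)+1) from by rw [← hq'],
        Real.rpow_add_one (ne_of_gt h)]
  rw [← hq'] at e1 e2
  linarith

end McCarthyAux

/-- For PSD matrices `B`, `C` and real `q ≥ 1`, `tr((B+C)^q) ≥ tr(B^q) + tr(C^q)`,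
where `tr(M^q)` for a PSD matrix `M` is defined spectrally as `∑ i, λᵢ(M) ^ q`. -/
theorem trace_rpow_add_ge_of_posSemidef {n : ℕ} (B C : Matrix (Fin n) (Fin n) ℝ)
    (hB : B.PosSemidef) (hC : C.PosSemidef) (q : ℝ) (hq : 1 ≤ q) :
    ∑ i, hB.isHermitian.eigenvalues i ^ q + ∑ i, hC.isHermitian.eigenvalues i ^ q ≤
      ∑ i, (hB.isHermitian.add hC.isHermitian).eigenvalues i ^ q := by
  rcases lt_or_ge q 2 with h2 | h2
  · rcases eq_or_lt_of_le hq with h1 | h1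
    · subst h1
      simp only [Real.rpow_one]
      have e1 := McCarthyAux.sum_eigenvalues_eq_trace hB.isHermitian
      have e2 := McCarthyAux.sum_eigenvalues_eq_trace hC.isHermitian
      have e3 := McCarthyAux.sum_eigenvalues_eq_trace (hB.isHermitian.add hC.isHermitian)
      rw [Matrix.trace_add] at e3
      linarith
    · exact McCarthyAux.branch_mid hB hC h1 h2
  · exact McCarthyAux.branch_ge2 hB hC h2
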